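/- For all x with 0 < x < π/2, we have x < (2·sin(x) + tan(x))/3. -/

import Mathlib

open Real Set

theorem snell_upper_bound (x : ℝ) (h0 : 0 < x) (h1 : x < Real.pi / 2) :
    x < (2 * Real.sin x + Real.tan x) / 3 := by
  set f : ℝ → ℝ := fun t => 2 * Real.sin t + Real.tan t - 3 * t with hf
  have key : StrictMonoOn f (Set.Ico 0 (Real.pi / 2)) := by
    apply strictMonoOn_of_deriv_pos (convex_Ico _ _)
    · apply ContinuousOn.sub
      · apply ContinuousOn.add
        · exact (Real.continuous_sin.continuousOn).const_smul 2 |>.congr fun t _ => by simp [smul_eq_mul]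
        · apply Real.continuousOn_tan.mono
          intro t ht
          simp only [mem_Ico] at ht
          exact Real.cos_pos_of_mem_Ioo ⟨by linarith [Real.pi_pos, ht.1], ht.2⟩ |>.ne'
      · exact (continuous_const.mul continuous_id).continuousOn
    · intro t ht
      rw [interior_Ico] at ht
      obtain ⟨ht0, ht1⟩ := ht
      have hc : 0 < Real.cos t := Real.cos_pos_of_mem_Ioo ⟨by linarith [Real.pi_pos], ht1⟩
      have hd : HasDerivAt f (2 * Real.cos t + 1 / Real.cos t ^ 2 - 3) t := by
        have h1 : HasDerivAt Real.sin (Real.cos t) t := Real.hasDerivAt_sin t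
        have h2 : HasDerivAt Real.tan (1 / Real.cos t ^ 2) t := Real.hasDerivAt_tan hc.ne'
        have h3 := ((h1.const_mul 2).add h2).sub ((hasDerivAt_id t).const_mul 3)
        rw [show f = ((fun y => 2 * Real.sin y) + Real.tan - fun y => 3 * id y) from by ext y; simp [hf]]
        exact h3.congr_deriv (by ring)
      rw [hd.deriv]
      have hc1 : Real.cos t < 1 := by
        have := Real.cos_lt_cos_of_nonneg_of_le_pi le_rfl (by linarith [Real.pi_gt_three]) ht0
        simpa using this
      have key2 : (3 - 2 * Real.cos t) * Real.cos t ^ 2 < 1 := by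
        nlinarith [sq_nonneg (Real.cos t - 1), mul_pos hc hc]
      have := (lt_div_iff₀ (by positivity : (0:ℝ) < Real.cos t ^ 2)).mpr key2
      linarith
  have h0' : (0 : ℝ) ∈ Set.Ico (0:ℝ) (Real.pi/2) := ⟨le_refl _, by positivity⟩
  have hx' : x ∈ Set.Ico (0:ℝ) (Real.pi/2) := ⟨h0.le, h1⟩
  have := key h0' hx' h0
  simp only [hf, Real.sin_zero, Real.tan_zero] at this
  linarith
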